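/- In the weak supervision Ising model with graph G^{st} (edges (λ_i, Y) for all 1 ≤ i ≤ m and the edge (λ_s, λ_t), all with parameter θ), the correlation of the endpoints of the extra edge equals E_{G^{st}}[λ_s λ_t] = (e^{3θ} − e^{−θ})/(e^{3θ} + 3e^{−θ}) = 1 − 4/(e^{4θ} + 3). -/
import Mathlib


open BigOperators

noncomputable section

/-- The `±1` spin value of a Boolean configuration entry. -/
def pm (b : Bool) : ℝ := if b then 1 else -1

/-- Energy (log unnormalized weight) of a full configuration `σ` of the sources and the latent
label under the graph `G^{st}`: edges `(λ_i, Y)` for all `i` and the single edge `(λ_s, λ_t)`,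
all with parameter `θ`. -/
def energy (m : ℕ) (θ : ℝ) (s t : Fin m) (σ : Fin m ⊕ Unit → Bool) : ℝ :=
  θ * ((∑ i : Fin m, pm (σ (Sum.inl i)) * pm (σ (Sum.inr ()))) +
    pm (σ (Sum.inl s)) * pm (σ (Sum.inl t)))

/-- Partition function of the Ising model `f_{G^{st}}`. -/
def partition (m : ℕ) (θ : ℝ) (s t : Fin m) : ℝ :=
  ∑ σ : Fin m ⊕ Unit → Bool, Real.exp (energy m θ s t σ)

/-- The Ising probability mass function `f_{G^{st}}` on full configurations `{−1,1}^{m+1}`. -/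
def isingPMF (m : ℕ) (θ : ℝ) (s t : Fin m) (σ : Fin m ⊕ Unit → Bool) : ℝ :=
  Real.exp (energy m θ s t σ) / partition m θ s t

/-- Marginal distribution `P_{G^{st}}` of the observed sources `(λ_1, …, λ_m)`. -/
def margPMF (m : ℕ) (θ : ℝ) (s t : Fin m) (x : Fin m → Bool) : ℝ :=
  ∑ y : Bool, isingPMF m θ s t (fun i => Sum.elim x (fun _ => y) i)

/-- Expectation `E_{G^{st}}[λ_a λ_b]`. -/
def isingCorr (m : ℕ) (θ : ℝ) (s t a b : Fin m) : ℝ :=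
  ∑ σ : Fin m ⊕ Unit → Bool,
    isingPMF m θ s t σ * (pm (σ (Sum.inl a)) * pm (σ (Sum.inl b)))

/-- Kullback–Leibler divergence between two pmfs on `{−1,1}^m`. -/
def klDiv (m : ℕ) (P Q : (Fin m → Bool) → ℝ) : ℝ :=
  ∑ x : Fin m → Bool, P x * Real.log (P x / Q x)

def splitEquiv (m : ℕ) (s t : Fin m) (hst : s ≠ t) :
    (Fin m ⊕ Unit → Bool) ≃ Bool × Bool × Bool × ({i : Fin m // i ≠ s ∧ i ≠ t} → Bool) where
  toFun σ := (σ (Sum.inr ()), σ (Sum.inl s), σ (Sum.inl t), fun i => σ (Sum.inl i.1))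
  invFun p := Sum.elim
    (fun i => if h : i = s then p.2.1 else if h' : i = t then p.2.2.1 else p.2.2.2 ⟨i, h, h'⟩)
    (fun _ => p.1)
  left_inv σ := by
    funext x
    rcases x with i | u
    · by_cases h : i = s
      · subst h; simp
      · by_cases h' : i = t
        · subst h'; simp [h]
        · simp [h, h']
    · simp
  right_inv p := by
    obtain ⟨y, a, b, g⟩ := p
    simp only [Sum.elim_inl, Sum.elim_inr]
    refine Prod.ext rfl (Prod.ext ?_ (Prod.ext ?_ ?_))
    · simp
    · simp [hst.symm]
    · funext i
      simp [i.2.1, i.2.2]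

lemma sum_factor (m : ℕ) (θ : ℝ) (s t : Fin m) (hst : s ≠ t) (w : Bool → Bool → Bool → ℝ) :
    ∑ σ : Fin m ⊕ Unit → Bool,
      Real.exp (energy m θ s t σ) * w (σ (Sum.inr ())) (σ (Sum.inl s)) (σ (Sum.inl t))
    = (Real.exp θ + Real.exp (-θ)) ^ (Fintype.card {i : Fin m // i ≠ s ∧ i ≠ t}) *
      ∑ y : Bool, ∑ a : Bool, ∑ b : Bool,
        Real.exp (θ * (pm a * pm y + pm b * pm y + pm a * pm b)) * w y a b := by
  classical
  rw [← Equiv.sum_comp (splitEquiv m s t hst).symm]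
  rw [Fintype.sum_prod_type, Finset.mul_sum]
  refine Finset.sum_congr rfl fun y _ => ?_
  rw [Fintype.sum_prod_type, Finset.mul_sum]
  refine Finset.sum_congr rfl fun a _ => ?_
  rw [Fintype.sum_prod_type, Finset.mul_sum]
  refine Finset.sum_congr rfl fun b _ => ?_
  have hσs : ∀ g : {i : Fin m // i ≠ s ∧ i ≠ t} → Bool,
      ((splitEquiv m s t hst).symm (y, a, b, g)) (Sum.inl s) = a := by
    intro g; simp [splitEquiv]
  have hσt : ∀ g : {i : Fin m // i ≠ s ∧ i ≠ t} → Bool,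
      ((splitEquiv m s t hst).symm (y, a, b, g)) (Sum.inl t) = b := by
    intro g; simp [splitEquiv, hst.symm]
  have hσy : ∀ g : {i : Fin m // i ≠ s ∧ i ≠ t} → Bool,
      ((splitEquiv m s t hst).symm (y, a, b, g)) (Sum.inr ()) = y := by
    intro g; simp [splitEquiv]
  have hσr : ∀ (g : {i : Fin m // i ≠ s ∧ i ≠ t} → Bool) (i : {i : Fin m // i ≠ s ∧ i ≠ t}),
      ((splitEquiv m s t hst).symm (y, a, b, g)) (Sum.inl i.1) = g i := by
    intro g i; simp [splitEquiv, i.2.1, i.2.2]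
  have henergy : ∀ g : {i : Fin m // i ≠ s ∧ i ≠ t} → Bool,
      energy m θ s t ((splitEquiv m s t hst).symm (y, a, b, g))
      = θ * (pm a * pm y + pm b * pm y + pm a * pm b)
        + ∑ i : {i : Fin m // i ≠ s ∧ i ≠ t}, θ * (pm (g i) * pm y) := by
    intro g
    unfold energy
    rw [hσs, hσt, hσy]
    set f : Fin m → ℝ := fun i =>
      pm (((splitEquiv m s t hst).symm (y, a, b, g)) (Sum.inl i)) * pm y with hf
    have h1 : ∑ i : Fin m, f i = f s + ∑ i ∈ Finset.univ.erase s, f i :=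
      (Finset.add_sum_erase _ f (Finset.mem_univ s)).symm
    have h2 : ∑ i ∈ Finset.univ.erase s, f i
        = f t + ∑ i ∈ (Finset.univ.erase s).erase t, f i :=
      (Finset.add_sum_erase _ f (Finset.mem_erase.mpr ⟨hst.symm, Finset.mem_univ t⟩)).symm
    have h3 : ∑ i ∈ (Finset.univ.erase s).erase t, f i
        = ∑ i : {i : Fin m // i ≠ s ∧ i ≠ t}, f i.1 := by
      rw [Finset.sum_subtype]
      intro x
      simp [Finset.mem_erase, and_comm]
    rw [h1, h2, h3]
    have hfs : f s = pm a * pm y := by rw [hf]; simp only [hσs g]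
    have hft : f t = pm b * pm y := by rw [hf]; simp only [hσt g]
    have hfr : ∀ i : {i : Fin m // i ≠ s ∧ i ≠ t}, f i.1 = pm (g i) * pm y := by
      intro i; rw [hf]; simp only [hσr g i]
    rw [hfs, hft]
    simp only [hfr]
    rw [← Finset.mul_sum]
    ring
  calc ∑ g : {i : Fin m // i ≠ s ∧ i ≠ t} → Bool,
        Real.exp (energy m θ s t ((splitEquiv m s t hst).symm (y, a, b, g))) *
          w (((splitEquiv m s t hst).symm (y, a, b, g)) (Sum.inr ()))
            (((splitEquiv m s t hst).symm (y, a, b, g)) (Sum.inl s))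
            (((splitEquiv m s t hst).symm (y, a, b, g)) (Sum.inl t))
      = ∑ g : {i : Fin m // i ≠ s ∧ i ≠ t} → Bool,
          (Real.exp (θ * (pm a * pm y + pm b * pm y + pm a * pm b)) * w y a b) *
            ∏ i : {i : Fin m // i ≠ s ∧ i ≠ t}, Real.exp (θ * (pm (g i) * pm y)) := by
        refine Finset.sum_congr rfl fun g _ => ?_
        rw [henergy g, hσs, hσt, hσy, Real.exp_add, Real.exp_sum]
        ring
    _ = (Real.exp θ + Real.exp (-θ)) ^ (Fintype.card {i : Fin m // i ≠ s ∧ i ≠ t}) *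
        (Real.exp (θ * (pm a * pm y + pm b * pm y + pm a * pm b)) * w y a b) := by
        rw [← Finset.mul_sum]
        have hswap : ∑ g : {i : Fin m // i ≠ s ∧ i ≠ t} → Bool,
            ∏ i : {i : Fin m // i ≠ s ∧ i ≠ t}, Real.exp (θ * (pm (g i) * pm y))
            = ∏ _i : {i : Fin m // i ≠ s ∧ i ≠ t},
                ∑ c : Bool, Real.exp (θ * (pm c * pm y)) := by
          rw [Finset.prod_univ_sum, Fintype.piFinset_univ]
        have hc : (∑ c : Bool, Real.exp (θ * (pm c * pm y)))
            = Real.exp θ + Real.exp (-θ) := by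
          cases y <;> simp [pm, Fintype.sum_bool] <;> ring_nf
        rw [hswap]
        simp only [hc]
        rw [Finset.prod_const, Finset.card_univ]
        ring

/-- In the weak supervision Ising model with graph `G^{st}`, the correlation
of the endpoints of the extra edge equals
`E_{G^{st}}[λ_s λ_t] = (e^{3θ} − e^{−θ})/(e^{3θ} + 3e^{−θ}) = 1 − 4/(e^{4θ} + 3)`. -/
theorem edge_correlation (m : ℕ) (hm : 2 ≤ m) (θ : ℝ) (hθ : 0 < θ)
    (s t : Fin m) (hst : s ≠ t) :
    isingCorr m θ s t s t =
      (Real.exp (3 * θ) - Real.exp (-θ)) / (Real.exp (3 * θ) + 3 * Real.exp (-θ)) ∧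
    isingCorr m θ s t s t = 1 - 4 / (Real.exp (4 * θ) + 3) := by
  set K : ℝ := (Real.exp θ + Real.exp (-θ)) ^ (Fintype.card {i : Fin m // i ≠ s ∧ i ≠ t})
    with hK
  have hKpos : 0 < K := pow_pos (by positivity) _
  have hB : 0 < Real.exp (3 * θ) + 3 * Real.exp (-θ) := by positivity
  have hZ : partition m θ s t = K * (2 * (Real.exp (3 * θ) + 3 * Real.exp (-θ))) := by
    have := sum_factor m θ s t hst (fun _ _ _ => 1)
    simp only [mul_one] at this
    rw [partition, this]
    congr 1
    simp only [Fintype.sum_bool, pm]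
    norm_num
    rw [show θ * 3 = 3 * θ by ring]
    ring
  have hN : (∑ σ : Fin m ⊕ Unit → Bool,
      Real.exp (energy m θ s t σ) * (pm (σ (Sum.inl s)) * pm (σ (Sum.inl t))))
      = K * (2 * (Real.exp (3 * θ) - Real.exp (-θ))) := by
    have := sum_factor m θ s t hst (fun _ a b => pm a * pm b)
    rw [this]
    congr 1
    simp only [Fintype.sum_bool, pm]
    norm_num
    rw [show θ * 3 = 3 * θ by ring]
    ring
  have hcorr : isingCorr m θ s t s t
      = (Real.exp (3 * θ) - Real.exp (-θ)) / (Real.exp (3 * θ) + 3 * Real.exp (-θ)) := by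
    unfold isingCorr isingPMF
    simp only [div_mul_eq_mul_div]
    rw [← Finset.sum_div]
    rw [hN, hZ]
    rw [show K * (2 * (Real.exp (3 * θ) - Real.exp (-θ)))
        = (K * 2) * (Real.exp (3 * θ) - Real.exp (-θ)) by ring,
      show K * (2 * (Real.exp (3 * θ) + 3 * Real.exp (-θ)))
        = (K * 2) * (Real.exp (3 * θ) + 3 * Real.exp (-θ)) by ring,
      mul_div_mul_left _ _ (by positivity)]
  refine ⟨hcorr, ?_⟩
  rw [hcorr]
  have h3 : Real.exp (3 * θ) = Real.exp θ ^ 3 := by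
    rw [show (3 : ℝ) * θ = θ + θ + θ by ring, Real.exp_add, Real.exp_add]; ring
  have h4 : Real.exp (4 * θ) = Real.exp θ ^ 4 := by
    rw [show (4 : ℝ) * θ = θ + θ + θ + θ by ring, Real.exp_add, Real.exp_add, Real.exp_add]
    ring
  have hm' : Real.exp (-θ) = (Real.exp θ)⁻¹ := Real.exp_neg θ
  have hu : 0 < Real.exp θ := Real.exp_pos θ
  rw [h3, h4, hm']
  have h4pos : (0 : ℝ) < Real.exp θ ^ 4 + 3 := by positivity
  have hBpos : (0 : ℝ) < Real.exp θ ^ 3 + 3 * (Real.exp θ)⁻¹ := by positivity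
  field_simp
  ring
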